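/- arXiv:2511.21666 — 2 statements merged into one kernel-verified Lean document; each statement's English description precedes it below -/
import Mathlib

section
/- Let H be a symmetric positive definite n×n real matrix written in block form H = [[A, B], [Bᵀ, C]] with A of size k×k, and let P = [0_{(n−k)×k}, I_{n−k}] be the projection onto the last n−k coordinates. Define H_t = (P H⁻¹ Pᵀ)⁻¹. Then for any u ∈ ℝᵏ and t ∈ ℝ^{n−k}, if (u, t)ᵀ H (u, t) ≤ 1 then tᵀ H_t t ≤ 1. -/
open Matrix

private lemma cs_psd {n : Type*} [Fintype n] [DecidableEq n]
    {M : Matrix n n ℝ} (hM : M.PosSemidef) (x y : n → ℝ) :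
    (x ⬝ᵥ (M *ᵥ y)) ^ 2 ≤ (x ⬝ᵥ (M *ᵥ x)) * (y ⬝ᵥ (M *ᵥ y)) := by
  open scoped MatrixOrder in obtain ⟨B, rfl⟩ := CStarAlgebra.nonneg_iff_eq_star_mul_self.mp hM.nonneg
  rw [star_eq_conjTranspose]
  have key : ∀ a b : n → ℝ, a ⬝ᵥ ((Bᴴ * B) *ᵥ b) = (B *ᵥ a) ⬝ᵥ (B *ᵥ b) := by
    intro a b
    rw [← mulVec_mulVec, dotProduct_mulVec, conjTranspose_eq_transpose_of_trivial,
      vecMul_transpose]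
  rw [key, key, key]
  simpa [dotProduct, pow_two, Finset.sum_mul_sum] using
    Finset.sum_mul_sq_le_sq_mul_sq Finset.univ (B *ᵥ x) (B *ᵥ y)

private lemma ellipsoid_projection_aux {k m : ℕ}
    (H : Matrix (Fin k ⊕ Fin m) (Fin k ⊕ Fin m) ℝ) (hH : H.PosDef)
    (u : Fin k → ℝ) (t : Fin m → ℝ)
    (hle : (Sum.elim u t) ⬝ᵥ (H *ᵥ Sum.elim u t) ≤ 1) :
    t ⬝ᵥ ((((Matrix.of fun i j => if j = Sum.inr i then (1 : ℝ) else 0 :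
        Matrix (Fin m) (Fin k ⊕ Fin m) ℝ) * H⁻¹ *
        (Matrix.of fun i j => if j = Sum.inr i then (1 : ℝ) else 0 :
        Matrix (Fin m) (Fin k ⊕ Fin m) ℝ)ᵀ)⁻¹) *ᵥ t) ≤ 1 := by
  set P : Matrix (Fin m) (Fin k ⊕ Fin m) ℝ :=
    Matrix.of fun i j => if j = Sum.inr i then (1 : ℝ) else 0 with hPdef
  set z : Fin k ⊕ Fin m → ℝ := Sum.elim u t with hzdef
  have hM : H⁻¹.PosDef := hH.inv
  set S : Matrix (Fin m) (Fin m) ℝ := P * H⁻¹ * Pᵀ with hSdef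
  -- basic facts about P
  have hPT : ∀ x : Fin m → ℝ, Pᵀ *ᵥ x = Sum.elim (0 : Fin k → ℝ) x := by
    intro x
    funext j
    cases j with
    | inl a => simp [hPdef, mulVec, dotProduct]
    | inr b => simp [hPdef, mulVec, dotProduct]
  have hPz : P *ᵥ z = t := by
    funext i
    simp [hPdef, hzdef, mulVec, dotProduct]
  -- conjugation identity
  have hconj : ∀ (A : Matrix (Fin k ⊕ Fin m) (Fin k ⊕ Fin m) ℝ) (x y : Fin m → ℝ),
      x ⬝ᵥ ((P * A * Pᵀ) *ᵥ y) = (Pᵀ *ᵥ x) ⬝ᵥ (A *ᵥ (Pᵀ *ᵥ y)) := by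
    intro A x y
    rw [← mulVec_mulVec, ← mulVec_mulVec, dotProduct_mulVec x, ← mulVec_transpose]
  -- S is positive definite
  have h1 : (H⁻¹)ᵀ = H⁻¹ := by
    rw [← conjTranspose_eq_transpose_of_trivial]; exact hM.1
  have hS : S.PosDef := by
    refine PosDef.of_dotProduct_mulVec_pos ?_ ?_
    · show Sᴴ = S
      rw [hSdef, conjTranspose_eq_transpose_of_trivial, transpose_mul, transpose_mul,
        transpose_transpose, h1, ← Matrix.mul_assoc]
    · intro x hx
      have hx' : Pᵀ *ᵥ x ≠ 0 := by
        rw [hPT]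
        intro h
        apply hx
        funext i
        have := congrFun h (Sum.inr i)
        simpa using this
      have hpos := hM.dotProduct_mulVec_pos hx'
      simp only [star_trivial] at hpos ⊢
      rw [hSdef, hconj]
      exact hpos
  have hSdet : IsUnit S.det := isUnit_iff_ne_zero.mpr hS.det_pos.ne'
  -- the key quantity
  set w : Fin m → ℝ := S⁻¹ *ᵥ t with hwdef
  set s : ℝ := t ⬝ᵥ (S⁻¹ *ᵥ t) with hsdef
  have hs0 : 0 ≤ s := by
    have := hS.inv.posSemidef.dotProduct_mulVec_nonneg t
    simpa using this
  set v : Fin k ⊕ Fin m → ℝ := Pᵀ *ᵥ w with hvdef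
  have hvm : w ᵥ* P = Pᵀ *ᵥ w := (mulVec_transpose P w).symm
  -- Fact A : v ⬝ᵥ z = s
  have factA : v ⬝ᵥ z = s := by
    rw [hvdef, hsdef, ← hvm, ← dotProduct_mulVec, hPz, hwdef, dotProduct_comm]
  -- Fact B : v ⬝ᵥ H⁻¹ v = s
  have factB : v ⬝ᵥ (H⁻¹ *ᵥ v) = s := by
    rw [hvdef, ← hconj, ← hSdef, hwdef, mulVec_mulVec,
      Matrix.mul_nonsing_inv S hSdet, one_mulVec, dotProduct_comm, hsdef]
  -- H⁻¹ (H z) = z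
  have hHz : H⁻¹ *ᵥ (H *ᵥ z) = z := by
    rw [Matrix.mulVec_mulVec, Matrix.nonsing_inv_mul H (isUnit_iff_ne_zero.mpr hH.det_pos.ne'),
      Matrix.one_mulVec]
  -- Cauchy-Schwarz
  have hcs := cs_psd hM.posSemidef v (H *ᵥ z)
  rw [hHz, factA, factB, dotProduct_comm (H *ᵥ z) z] at hcs
  -- conclude
  show s ≤ 1
  rcases eq_or_lt_of_le hs0 with h | h
  · rw [← h]; norm_num
  · have h1' : s * s ≤ s * (z ⬝ᵥ (H *ᵥ z)) := by rw [← pow_two]; exact hcs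
    have h2 : s ≤ z ⬝ᵥ (H *ᵥ z) := le_of_mul_le_mul_left h1' h
    exact h2.trans hle

/-- Projection (shadow) of an ellipsoid: if `H ≻ 0` and
`H_t = (P H⁻¹ Pᵀ)⁻¹` where `P = [0, I]` projects onto the last coordinates,
then `(u, t)ᵀ H (u, t) ≤ 1` implies `tᵀ H_t t ≤ 1`. -/
theorem ellipsoid_projection {k m : ℕ}
    (H : Matrix (Fin k ⊕ Fin m) (Fin k ⊕ Fin m) ℝ) (hH : H.PosDef) :
    ∀ (u : Fin k → ℝ) (t : Fin m → ℝ),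
      let P : Matrix (Fin m) (Fin k ⊕ Fin m) ℝ :=
        Matrix.of fun i j => if j = Sum.inr i then (1 : ℝ) else 0
      let Ht : Matrix (Fin m) (Fin m) ℝ := (P * H⁻¹ * Pᵀ)⁻¹
      (Sum.elim u t) ⬝ᵥ (H *ᵥ Sum.elim u t) ≤ 1 →
        t ⬝ᵥ (Ht *ᵥ t) ≤ 1 := by
  intro u t P Ht hle
  exact ellipsoid_projection_aux H hH u t hle
end

section
/- Let q be a unit quaternion representing the rotation R ∈ SO(3), i.e., for all y ∈ ℝ³, q ∘ (0, y) ∘ q⁻¹ = (0, R y). Then for all x, y ∈ ℝ³, xᵀ R y = − qᵀ Ω₁(x̃) Ω₂(ỹ) q, where x̃ = (0, x) and ỹ = (0, y) are the pure-imaginary quaternions and Ω₁, Ω₂ are the left/right quaternion multiplication matrices. -/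
open Matrix Quaternion

/-- The coordinate vector of a quaternion in the basis `(1, i, j, k)`. -/
noncomputable def qvec (a : Quaternion ℝ) : Fin 4 → ℝ := ![a.re, a.imI, a.imJ, a.imK]

/-- Matrix of left quaternion multiplication by `a`. -/
noncomputable def Omega1 (a : Quaternion ℝ) : Matrix (Fin 4) (Fin 4) ℝ :=
  !![a.re, -a.imI, -a.imJ, -a.imK;
     a.imI, a.re, -a.imK, a.imJ;
     a.imJ, a.imK, a.re, -a.imI;
     a.imK, -a.imJ, a.imI, a.re]

/-- Matrix of right quaternion multiplication by `a`. -/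
noncomputable def Omega2 (a : Quaternion ℝ) : Matrix (Fin 4) (Fin 4) ℝ :=
  !![a.re, -a.imI, -a.imJ, -a.imK;
     a.imI, a.re, a.imK, -a.imJ;
     a.imJ, -a.imK, a.re, a.imI;
     a.imK, a.imJ, -a.imI, a.re]

/-- The pure-imaginary quaternion with vector part `v`. -/
noncomputable def pureQuat (v : Fin 3 → ℝ) : Quaternion ℝ := ⟨0, v 0, v 1, v 2⟩

/-- If the unit quaternion `q` represents the rotation `R` (acting by
conjugation on pure quaternions), then `xᵀ R y = − qᵀ Ω₁(x̃) Ω₂(ỹ) q`. -/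
theorem bilinear_form_as_quaternion_quadratic
    (q : Quaternion ℝ) (hq : ‖q‖ = 1)
    (R : Matrix (Fin 3) (Fin 3) ℝ)
    (hrot : ∀ y : Fin 3 → ℝ, q * pureQuat y * q⁻¹ = pureQuat (R *ᵥ y)) :
    ∀ x y : Fin 3 → ℝ,
      x ⬝ᵥ (R *ᵥ y) =
        -(qvec q ⬝ᵥ ((Omega1 (pureQuat x) * Omega2 (pureQuat y)) *ᵥ qvec q)) := by
  have hqinv : q⁻¹ = star q := by
    have h1 : q * star q = 1 := by
      rw [Quaternion.self_mul_star, Quaternion.normSq_eq_norm_mul_self, hq, one_mul]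
      norm_num
    exact inv_eq_of_mul_eq_one_right h1
  intro x y
  have h := hrot y
  rw [hqinv] at h
  have h1 := congrArg QuaternionAlgebra.imI h
  have h2 := congrArg QuaternionAlgebra.imJ h
  have h3 := congrArg QuaternionAlgebra.imK h
  simp only [Quaternion.re_mul, Quaternion.imI_mul, Quaternion.imJ_mul, Quaternion.imK_mul] at h1 h2 h3
  simp only [pureQuat, Quaternion.imI_mul, Quaternion.imJ_mul, Quaternion.imK_mul,
    Quaternion.re_mul, Quaternion.re_star, Quaternion.imI_star, Quaternion.imJ_star,
    Quaternion.imK_star, mulVec, dotProduct, Fin.sum_univ_three] at h1 h2 h3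
  simp only [dotProduct, mulVec, Matrix.mul_apply, Fin.sum_univ_four, Fin.sum_univ_three,
    qvec, Omega1, Omega2, pureQuat,
    Matrix.cons_val_zero, Matrix.cons_val_one, Matrix.head_cons, Matrix.cons_val_fin_one,
    Matrix.cons_val', Matrix.empty_val', Matrix.head_fin_const, Matrix.cons_val_two,
    Matrix.cons_val_three, Matrix.tail_cons, Matrix.of_apply]
  linear_combination -(x 0 * h1 + x 1 * h2 + x 2 * h3)
end
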